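/- Let Σ be a set of pairs of words over ℕ in which every pair is balanced, and let Λ be the fully invariant congruence generated by Σ. Then every Λ-class, viewed as a subset of Z (a set of words, not containing ∞), is a clopen subset of Z; consequently, for the relation θ on Z whose classes are the Λ-classes together with the singleton {∞}, any two distinct θ-classes are separated by a clopen union of θ-classes. -/

import Mathlib

open OnePoint Filter Topology

/-- The list of letters of a word in the free semigroup on `ℕ`. -/
def wordLetters (u : FreeSemigroup ℕ) : List ℕ := u.head :: u.tail

/-- For a subset `U` of `OnePoint (FreeSemigroup ℕ)` and `k : ℕ`, the set of words
all of whose letters lie in `{0, …, k-1}` and which do not belong to `U`. -/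
def boundedOutside (U : Set (OnePoint (FreeSemigroup ℕ))) (k : ℕ) : Set (FreeSemigroup ℕ) :=
  {u | (∀ x ∈ wordLetters u, x < k) ∧ (u : OnePoint (FreeSemigroup ℕ)) ∉ U}

/-- The inductive-limit topology on `OnePoint (FreeSemigroup ℕ)` of the one-point
compactifications of the discrete free semigroups on the finite alphabets
`{0, …, k-1}`. -/
def Ztop : TopologicalSpace (OnePoint (FreeSemigroup ℕ)) where
  IsOpen U := ∞ ∈ U → ∀ k : ℕ, (boundedOutside U k).Finite
  isOpen_univ := fun _ k => by
    convert Set.finite_empty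
    simp [boundedOutside]
  isOpen_inter := fun U V hU hV h k => by
    refine ((hU h.1 k).union (hV h.2 k)).subset ?_
    rintro u ⟨hb, hn⟩
    by_cases hu : (u : OnePoint (FreeSemigroup ℕ)) ∈ U
    · exact Or.inr ⟨hb, fun hv => hn ⟨hu, hv⟩⟩
    · exact Or.inl ⟨hb, hu⟩
  isOpen_sUnion := fun S hS h k => by
    obtain ⟨U, hUS, hU⟩ := h
    refine (hS U hUS hU k).subset ?_
    rintro u ⟨hb, hn⟩
    exact ⟨hb, fun h' => hn ⟨U, hUS, h'⟩⟩

/-- The fully invariant congruence on `FreeSemigroup ℕ` generated by a set `E` of pairs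
of words: the congruence generated by all pairs `(φ u, φ v)` with `(u, v) ∈ E` and `φ` a
semigroup endomorphism of `FreeSemigroup ℕ`. -/
def ficCongruence (E : Set (FreeSemigroup ℕ × FreeSemigroup ℕ)) : Con (FreeSemigroup ℕ) :=
  conGen (fun a b => ∃ p ∈ E, ∃ φ : FreeSemigroup ℕ →ₙ* FreeSemigroup ℕ,
    a = φ p.1 ∧ b = φ p.2)

/-- A pair of words over `ℕ` is balanced if every letter occurs the same number of times
in both components. -/
def BalancedPair (p : FreeSemigroup ℕ × FreeSemigroup ℕ) : Prop :=
  ∀ x : ℕ, (wordLetters p.1).count x = (wordLetters p.2).count x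

/-- The relation `θ` on `Z = OnePoint (FreeSemigroup ℕ)` whose classes are the classes of
the fully invariant congruence generated by `E` together with the singleton `{∞}`. -/
def thetaRel (E : Set (FreeSemigroup ℕ × FreeSemigroup ℕ))
    (a b : OnePoint (FreeSemigroup ℕ)) : Prop :=
  (a = ∞ ∧ b = ∞) ∨ ∃ u v : FreeSemigroup ℕ, ficCongruence E u v
    ∧ a = (u : OnePoint (FreeSemigroup ℕ)) ∧ b = (v : OnePoint (FreeSemigroup ℕ))

lemma wordLetters_mul (a b : FreeSemigroup ℕ) :
    wordLetters (a * b) = wordLetters a ++ wordLetters b := rfl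

lemma wordLetters_of (x : ℕ) : wordLetters (FreeSemigroup.of x) = [x] := rfl

lemma wordLetters_injective : Function.Injective wordLetters := by
  rintro ⟨h1, t1⟩ ⟨h2, t2⟩ h
  simpa [wordLetters, FreeSemigroup.mk.injEq] using h

/-- The multiset of letters of a word. -/
def letterMul (u : FreeSemigroup ℕ) : Multiset ℕ := (wordLetters u : Multiset ℕ)

lemma letterMul_map (φ : FreeSemigroup ℕ →ₙ* FreeSemigroup ℕ) (w : FreeSemigroup ℕ) :
    letterMul (φ w) = (letterMul w).bind (fun y => letterMul (φ (FreeSemigroup.of y))) := by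
  induction w using FreeSemigroup.recOnMul with
  | ih1 x => simp [letterMul, wordLetters_of]
  | ih2 x y ih1 ih2 =>
    simp only [map_mul, letterMul, wordLetters_mul, ← Multiset.coe_add] at *
    simp [Multiset.add_bind, ih1, ih2]

/-- The congruence "having the same multiset of letters". -/
def letterCon : Con (FreeSemigroup ℕ) where
  r a b := letterMul a = letterMul b
  iseqv := ⟨fun _ => rfl, Eq.symm, Eq.trans⟩
  mul' h1 h2 := by
    show letterMul _ = letterMul _
    simp only [letterMul, wordLetters_mul, ← Multiset.coe_add]
    exact congrArg₂ (· + ·) h1 h2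

lemma fic_le_letterCon (E : Set (FreeSemigroup ℕ × FreeSemigroup ℕ))
    (hE : ∀ p ∈ E, BalancedPair p) : ficCongruence E ≤ letterCon := by
  apply Con.conGen_le.mpr
  rintro a b ⟨p, hp, φ, rfl, rfl⟩
  show letterMul _ = letterMul _
  rw [letterMul_map, letterMul_map]
  congr 1
  refine Multiset.ext.mpr fun x => ?_
  simpa [letterMul, Multiset.coe_count] using hE p hp x

lemma finite_fixed_letters (m : Multiset ℕ) :
    {v : FreeSemigroup ℕ | letterMul v = m}.Finite := by
  induction m using Quot.inductionOn with
  | h l =>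
    apply Set.Finite.of_finite_image (f := wordLetters) ?_ wordLetters_injective.injOn
    refine (l.permutations.finite_toSet).subset ?_
    rintro _ ⟨v, hv, rfl⟩
    simp only [Set.mem_setOf_eq, List.mem_permutations]
    exact Quotient.exact hv

/-- If every pair in `E` is balanced, then every class of the fully invariant congruence
generated by `E`, viewed as a subset of `Z = OnePoint (FreeSemigroup ℕ)` with the
inductive-limit topology, is clopen; consequently, any two distinct classes of the
relation `θ` (whose classes are the congruence classes together with `{∞}`) are separated
by a clopen union of `θ`-classes. -/
theorem ficCongruence_classes_clopen
    (E : Set (FreeSemigroup ℕ × FreeSemigroup ℕ)) (hE : ∀ p ∈ E, BalancedPair p) :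
    letI : TopologicalSpace (OnePoint (FreeSemigroup ℕ)) := Ztop
    (∀ u : FreeSemigroup ℕ,
      IsClopen {z : OnePoint (FreeSemigroup ℕ) | ∃ v : FreeSemigroup ℕ,
        ficCongruence E u v ∧ z = (v : OnePoint (FreeSemigroup ℕ))})
    ∧ (∀ a b : OnePoint (FreeSemigroup ℕ), ¬ thetaRel E a b →
        ∃ U : Set (OnePoint (FreeSemigroup ℕ)), IsClopen U
          ∧ (∀ z z' : OnePoint (FreeSemigroup ℕ), thetaRel E z z' → (z ∈ U ↔ z' ∈ U))
          ∧ a ∈ U ∧ b ∉ U) := by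
  letI : TopologicalSpace (OnePoint (FreeSemigroup ℕ)) := Ztop
  have hle := fic_le_letterCon E hE
  set Λ := ficCongruence E with hΛ
  have hfin : ∀ u : FreeSemigroup ℕ, {v | Λ u v}.Finite := fun u =>
    (finite_fixed_letters (letterMul u)).subset fun v hv => (hle hv).symm
  set S : FreeSemigroup ℕ → Set (OnePoint (FreeSemigroup ℕ)) :=
    fun u => {z | ∃ v : FreeSemigroup ℕ, Λ u v ∧ z = (v : OnePoint (FreeSemigroup ℕ))}
    with hS
  have hfinZ : ∀ u, (S u).Finite := by
    intro u
    have heq : S u = (fun v : FreeSemigroup ℕ => (v : OnePoint (FreeSemigroup ℕ))) ''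
        {v | Λ u v} := by
      ext z
      simp only [hS, Set.mem_setOf_eq, Set.mem_image, eq_comm]
    rw [heq]
    exact (hfin u).image _
  have hmem : ∀ u w : FreeSemigroup ℕ, (w : OnePoint (FreeSemigroup ℕ)) ∈ S u ↔ Λ u w := by
    intro u w
    constructor
    · rintro ⟨v, hv, he⟩
      rwa [OnePoint.coe_eq_coe.mp he]
    · intro h
      exact ⟨w, h, rfl⟩
  have hinfty : ∀ u, ∞ ∉ S u := by
    rintro u ⟨v, _, he⟩
    exact (OnePoint.infty_ne_coe v) he
  have hclopen : ∀ u, IsClopen (S u) := by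
    intro u
    constructor
    · -- closed
      refine ⟨fun _ k => ?_⟩
      refine (((hfinZ u).preimage (f := (fun v : FreeSemigroup ℕ =>
        (v : OnePoint (FreeSemigroup ℕ)))) (OnePoint.coe_injective.injOn)).subset ?_)
      rintro w ⟨_, hw⟩
      simpa using hw
    · -- open
      exact fun h => absurd h (hinfty u)
  refine ⟨hclopen, ?_⟩
  intro a b hab
  match a, b with
  | ∞, ∞ => exact absurd (Or.inl ⟨rfl, rfl⟩) hab
  | ∞, (v : FreeSemigroup ℕ) =>
    refine ⟨(S v)ᶜ, (hclopen v).compl, ?_, hinfty v, ?_⟩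
    · rintro z z' (⟨rfl, rfl⟩ | ⟨w, w', hww', rfl, rfl⟩)
      · exact Iff.rfl
      · simp only [Set.mem_compl_iff, hmem]
        exact not_congr ⟨fun h => h.trans hww', fun h => h.trans (Λ.symm hww')⟩
    · simp only [Set.mem_compl_iff, not_not, hmem]
      exact Λ.refl v
  | (u : FreeSemigroup ℕ), b =>
    refine ⟨S u, hclopen u, ?_, (hmem u u).mpr (Λ.refl u), ?_⟩
    · rintro z z' (⟨rfl, rfl⟩ | ⟨w, w', hww', rfl, rfl⟩)
      · exact Iff.rfl
      · simp only [hmem]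
        exact ⟨fun h => h.trans hww', fun h => h.trans (Λ.symm hww')⟩
    · match b with
      | ∞ => exact hinfty u
      | (v : FreeSemigroup ℕ) =>
        intro hvS
        exact hab (Or.inr ⟨u, v, (hmem u v).mp hvS, rfl, rfl⟩)
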